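/- arXiv:1702.07118 — 3 statements merged into one kernel-verified Lean document; each statement's English description precedes it below -/
import Mathlib

section
/- Let p(x|μ,σ) = (σ/(4π sinh σ)) exp(σ⟨x,μ⟩) be the von Mises–Fisher density on S². For every unit vector μ, every σ > 0, and every vector v ∈ ℝ³ orthogonal to μ, the cross term ∫_{S²} (⟨x,μ⟩ − (coth σ − 1/σ)) · σ⟨x,v⟩ · p(x|μ,σ) dA(x) equals 0. (This is the vanishing of the mixed dσ·dμ component of the Rao–Fisher metric, which makes the metric of Example 2 a warped metric of the form (1).) -/
open MeasureTheory Real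
open scoped RealInnerProductSpace

/-- For the von Mises–Fisher density `p(x|μ,σ) = (σ/(4π sinh σ)) exp(σ⟪x,μ⟫)` on the unit
sphere `S² ⊂ ℝ³`, and any vector `v` orthogonal to the mean direction `μ`, the mixed
`dσ·dμ` component of the Rao–Fisher metric vanishes:
`E[(∂_σ log p)(∂_v log p)] = E[(⟪x,μ⟫ - (coth σ - 1/σ)) σ⟪x,v⟫] = 0`. -/
theorem vonMisesFisher_mixed_term_vanishes
    (μ : EuclideanSpace ℝ (Fin 3)) (hμ : ‖μ‖ = 1) (σ : ℝ) (hσ : 0 < σ)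
    (v : EuclideanSpace ℝ (Fin 3)) (hv : ⟪v, μ⟫ = 0) :
    (∫ x in Metric.sphere (0 : EuclideanSpace ℝ (Fin 3)) 1,
        (⟪x, μ⟫ - (Real.cosh σ / Real.sinh σ - 1 / σ)) * (σ * ⟪x, v⟫)
          * (σ / (4 * π * Real.sinh σ) * Real.exp (σ * ⟪x, μ⟫)) ∂(μH[2])) = 0 := by
  set K : Submodule ℝ (EuclideanSpace ℝ (Fin 3)) := (ℝ ∙ v)ᗮ with hK
  set R : EuclideanSpace ℝ (Fin 3) ≃ₗᵢ[ℝ] EuclideanSpace ℝ (Fin 3) := Submodule.reflection K with hR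
  set F : EuclideanSpace ℝ (Fin 3) → ℝ := fun x =>
    (⟪x, μ⟫ - (Real.cosh σ / Real.sinh σ - 1 / σ)) * (σ * ⟪x, v⟫)
      * (σ / (4 * π * Real.sinh σ) * Real.exp (σ * ⟪x, μ⟫)) with hF
  have hμK : μ ∈ K := by
    rw [hK, Submodule.mem_orthogonal_singleton_iff_inner_right]
    exact hv
  have hRμ : R μ = μ := Submodule.reflection_mem_subspace_eq_self hμK
  have hRv : R v = -v :=
    Submodule.reflection_mem_subspace_orthogonal_precomplement_eq_neg
      (Submodule.mem_span_singleton_self v)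
  have h1 : ∀ x : EuclideanSpace ℝ (Fin 3), ⟪R x, μ⟫ = ⟪x, μ⟫ := fun x => by
    conv_lhs => rw [← hRμ]
    exact R.inner_map_map x μ
  have h2 : ∀ x : EuclideanSpace ℝ (Fin 3), ⟪R x, v⟫ = -⟪x, v⟫ := fun x => by
    have h := R.inner_map_map x v
    rw [hRv, inner_neg_right] at h
    linarith
  have hodd : ∀ x : EuclideanSpace ℝ (Fin 3), F (R x) = -F x := fun x => by
    simp only [hF, h1 x, h2 x]
    ring
  have hmp : MeasurePreserving (R : EuclideanSpace ℝ (Fin 3) → EuclideanSpace ℝ (Fin 3))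
      (μH[2]) (μH[2]) :=
    R.toIsometryEquiv.measurePreserving_hausdorffMeasure 2
  have hemb : MeasurableEmbedding (R : EuclideanSpace ℝ (Fin 3) → EuclideanSpace ℝ (Fin 3)) :=
    R.toIsometryEquiv.toHomeomorph.measurableEmbedding
  have hpre : (R : EuclideanSpace ℝ (Fin 3) → EuclideanSpace ℝ (Fin 3)) ⁻¹'
      Metric.sphere (0 : EuclideanSpace ℝ (Fin 3)) 1
      = Metric.sphere (0 : EuclideanSpace ℝ (Fin 3)) 1 := by
    ext x
    simp [Metric.mem_sphere, dist_eq_norm, R.norm_map]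
  set S := Metric.sphere (0 : EuclideanSpace ℝ (Fin 3)) 1 with hS
  have key : (∫ x in S, F x ∂(μH[2])) = ∫ x in S, F (R x) ∂(μH[2]) := by
    rw [← hmp.setIntegral_preimage_emb hemb F S, hpre]
  have key3 : (∫ x in S, F (R x) ∂(μH[2])) = -∫ x in S, F x ∂(μH[2]) := by
    rw [← integral_neg]
    exact integral_congr_ae (Filter.Eventually.of_forall fun x => hodd x)
  have key2 : (∫ x in S, F x ∂(μH[2])) = -∫ x in S, F x ∂(μH[2]) := key.trans key3
  linarith [key2]
end

section
/- Define I₀(σ) = 1/σ² − 1/sinh²(σ) and I₁(σ) = σ coth(σ) − 1 for σ > 0, so that I₁′(σ) = coth(σ) − σ/sinh²(σ). Then for every σ > 0, (I₁′(σ))² > 4 I₀(σ) I₁(σ). (Equivalently, the extrinsic sectional curvature K|_σ = 1/I₁ − (1/4)(∂_r I₁ / I₁)² of each sphere S²×{σ} in the von Mises–Fisher statistical manifold, with ∂_r = I₀^{-1/2} ∂_σ, is strictly negative for σ > 0 — Eq. (13) obtained from the Gauss equation (11) with K^{S²} = 1.) -/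
open Real

private lemma aux_mono {f : ℝ → ℝ} (hd : ∀ y, HasDerivAt f (deriv f y) y)
    (hpos : ∀ y > (0:ℝ), 0 < deriv f y) (h0 : f 0 = 0) : ∀ y > (0:ℝ), 0 < f y := by
  intro y hy
  have hmono : StrictMonoOn f (Set.Ici 0) := by
    apply strictMonoOn_of_deriv_pos (convex_Ici 0)
    · exact (fun x _ => (hd x).differentiableAt.continuousAt.continuousWithinAt)
    · intro x hx
      exact hpos x (by simpa using hx)
  have := hmono (Set.self_mem_Ici) (Set.mem_Ici.2 hy.le) hy
  simpa [h0] using this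

private lemma lemA : ∀ y > (0:ℝ), 0 < y * Real.cosh y - Real.sinh y := by
  apply aux_mono (f := fun y => y * Real.cosh y - Real.sinh y)
  · intro y
    have h : HasDerivAt (fun y => y * Real.cosh y - Real.sinh y)
        (1 * Real.cosh y + y * Real.sinh y - Real.cosh y) y :=
      ((hasDerivAt_id y).mul (Real.hasDerivAt_cosh y)).sub (Real.hasDerivAt_sinh y)
    rw [h.deriv]; exact h
  · intro y hy
    have h : HasDerivAt (fun y => y * Real.cosh y - Real.sinh y)
        (1 * Real.cosh y + y * Real.sinh y - Real.cosh y) y :=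
      ((hasDerivAt_id y).mul (Real.hasDerivAt_cosh y)).sub (Real.hasDerivAt_sinh y)
    rw [h.deriv]
    have := Real.sinh_pos_iff.2 hy
    nlinarith
  · simp

private lemma lemB : ∀ y > (0:ℝ), 0 < y * Real.sinh y + 2 - 2 * Real.cosh y := by
  apply aux_mono (f := fun y => y * Real.sinh y + 2 - 2 * Real.cosh y)
  · intro y
    have h : HasDerivAt (fun y => y * Real.sinh y + 2 - 2 * Real.cosh y)
        (1 * Real.sinh y + y * Real.cosh y + 0 - 2 * Real.sinh y) y :=
      ((((hasDerivAt_id y).mul (Real.hasDerivAt_sinh y)).add (hasDerivAt_const y 2)).sub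
        ((Real.hasDerivAt_cosh y).const_mul 2))
    rw [h.deriv]; exact h
  · intro y hy
    have h : HasDerivAt (fun y => y * Real.sinh y + 2 - 2 * Real.cosh y)
        (1 * Real.sinh y + y * Real.cosh y + 0 - 2 * Real.sinh y) y :=
      ((((hasDerivAt_id y).mul (Real.hasDerivAt_sinh y)).add (hasDerivAt_const y 2)).sub
        ((Real.hasDerivAt_cosh y).const_mul 2))
    rw [h.deriv]
    have := lemA y hy
    nlinarith
  · simp

private lemma lemC : ∀ y > (0:ℝ), 0 < y * Real.cosh y + 2 * y - 3 * Real.sinh y := by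
  apply aux_mono (f := fun y => y * Real.cosh y + 2 * y - 3 * Real.sinh y)
  · intro y
    have h : HasDerivAt (fun y => y * Real.cosh y + 2 * y - 3 * Real.sinh y)
        (1 * Real.cosh y + y * Real.sinh y + 2 * 1 - 3 * Real.cosh y) y :=
      (((hasDerivAt_id y).mul (Real.hasDerivAt_cosh y)).add
        ((hasDerivAt_id y).const_mul 2)).sub ((Real.hasDerivAt_sinh y).const_mul 3)
    rw [h.deriv]; exact h
  · intro y hy
    have h : HasDerivAt (fun y => y * Real.cosh y + 2 * y - 3 * Real.sinh y)
        (1 * Real.cosh y + y * Real.sinh y + 2 * 1 - 3 * Real.cosh y) y :=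
      (((hasDerivAt_id y).mul (Real.hasDerivAt_cosh y)).add
        ((hasDerivAt_id y).const_mul 2)).sub ((Real.hasDerivAt_sinh y).const_mul 3)
    rw [h.deriv]
    have := lemB y hy
    nlinarith
  · simp

private lemma lemD : ∀ y > (0:ℝ), 0 < y * Real.sinh y + y ^ 2 + 4 - 4 * Real.cosh y := by
  apply aux_mono (f := fun y => y * Real.sinh y + y ^ 2 + 4 - 4 * Real.cosh y)
  · intro y
    have h : HasDerivAt (fun y => y * Real.sinh y + y ^ 2 + 4 - 4 * Real.cosh y)
        (1 * Real.sinh y + y * Real.cosh y + 2 * y + 0 - 4 * Real.sinh y) y := by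
      have hp : HasDerivAt (fun y : ℝ => y ^ 2) (2 * y) y := by
        simpa using (hasDerivAt_pow 2 y)
      exact ((((hasDerivAt_id y).mul (Real.hasDerivAt_sinh y)).add hp).add
        (hasDerivAt_const y 4)).sub ((Real.hasDerivAt_cosh y).const_mul 4)
    rw [h.deriv]; exact h
  · intro y hy
    have h : HasDerivAt (fun y => y * Real.sinh y + y ^ 2 + 4 - 4 * Real.cosh y)
        (1 * Real.sinh y + y * Real.cosh y + 2 * y + 0 - 4 * Real.sinh y) y := by
      have hp : HasDerivAt (fun y : ℝ => y ^ 2) (2 * y) y := by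
        simpa using (hasDerivAt_pow 2 y)
      exact ((((hasDerivAt_id y).mul (Real.hasDerivAt_sinh y)).add hp).add
        (hasDerivAt_const y 4)).sub ((Real.hasDerivAt_cosh y).const_mul 4)
    rw [h.deriv]
    have := lemC y hy
    nlinarith
  · simp

/-- The key positivity: `σ sinh σ cosh σ + σ² - 2 sinh² σ > 0` for `σ > 0`. -/
private lemma key_pos (σ : ℝ) (hσ : 0 < σ) :
    0 < σ * Real.cosh σ * Real.sinh σ + σ ^ 2 - 2 * Real.sinh σ ^ 2 := by
  have hD := lemD (2 * σ) (by linarith)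
  have h1 : Real.sinh (2 * σ) = 2 * Real.sinh σ * Real.cosh σ := Real.sinh_two_mul σ
  have h2 : Real.cosh (2 * σ) = 2 * Real.cosh σ ^ 2 - 1 := by rw [Real.cosh_two_mul]; nlinarith [Real.cosh_sq σ]
  have h3 : Real.cosh σ ^ 2 = 1 + Real.sinh σ ^ 2 := by
    have := Real.cosh_sq σ; linarith
  rw [h1, h2, h3] at hD
  nlinarith

/-- Strict negativity of the extrinsic sectional curvature
`K|_σ = 1/I₁ - (1/4)(∂_r I₁ / I₁)²` (with `∂_r = I₀^{-1/2} ∂_σ`) of each sphere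
`S² × {σ}` of the von Mises–Fisher statistical manifold: with
`I₀(σ) = 1/σ² - 1/sinh² σ`, `I₁(σ) = σ coth σ - 1` and
`I₁'(σ) = coth σ - σ/sinh² σ`, one has `(I₁'(σ))² > 4 I₀(σ) I₁(σ)` for every `σ > 0`. -/
theorem vonMisesFisher_extrinsic_curvature_negative (σ : ℝ) (hσ : 0 < σ) :
    (Real.cosh σ / Real.sinh σ - σ / Real.sinh σ ^ 2) ^ 2
      > 4 * (1 / σ ^ 2 - 1 / Real.sinh σ ^ 2) * (σ * (Real.cosh σ / Real.sinh σ) - 1) := by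
  have hs : 0 < Real.sinh σ := Real.sinh_pos_iff.2 hσ
  have hg := key_pos σ hσ
  rw [gt_iff_lt, ← sub_pos]
  have hid : (Real.cosh σ / Real.sinh σ - σ / Real.sinh σ ^ 2) ^ 2
      - 4 * (1 / σ ^ 2 - 1 / Real.sinh σ ^ 2) * (σ * (Real.cosh σ / Real.sinh σ) - 1)
      = ((σ * Real.cosh σ * Real.sinh σ + σ ^ 2 - 2 * Real.sinh σ ^ 2)
          / (σ * Real.sinh σ ^ 2)) ^ 2 := by
    field_simp
    ring
  rw [hid]
  positivity
end

section
/- The integral ∫₁^∞ √(1/σ² − 1/sinh²(σ)) dσ diverges (equals +∞). (This is the second completeness condition of Remark i, which holds for the von Mises–Fisher model: a geodesic cannot escape to σ = ∞ within a finite time.) -/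
open Real MeasureTheory

lemma sinh_ge_two_mul {x : ℝ} (hx : 3 ≤ x) : 2 * x ≤ Real.sinh x := by
  have h1 : (2.7 : ℝ) < Real.exp 1 := by
    have := Real.exp_one_gt_d9; linarith
  have h3 : Real.exp 3 = Real.exp 1 ^ 3 := by
    rw [← Real.exp_nat_mul]; norm_num
  have h19 : (19 : ℝ) ≤ Real.exp 3 := by
    rw [h3]
    have : (2.7 : ℝ) ^ 3 < Real.exp 1 ^ 3 :=
      pow_lt_pow_left₀ h1 (by norm_num) (by norm_num)
    nlinarith
  have hx3 : Real.exp 3 * Real.exp (x - 3) = Real.exp x := by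
    rw [← Real.exp_add]; ring_nf
  have hge : Real.exp x ≥ 19 * (x - 2) := by
    have h4 : (x - 3) + 1 ≤ Real.exp (x - 3) := Real.add_one_le_exp _
    have h5 : Real.exp (x - 3) > 0 := Real.exp_pos _
    nlinarith
  have hsinh : Real.sinh x = (Real.exp x - Real.exp (-x)) / 2 := Real.sinh_eq x
  have hneg : Real.exp (-x) ≤ 1 := Real.exp_le_one_iff.mpr (by linarith)
  rw [hsinh]
  nlinarith

/-- The second completeness condition holds for the von Mises–Fisher model: the integral
`∫₁^∞ √(I₀(σ)) dσ`, with `I₀(σ) = 1/σ² - 1/sinh² σ`, diverges, so a geodesic cannot reach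
`σ = ∞` within a finite time. -/
theorem vonMisesFisher_sqrtI₀_integral_diverges_at_infinity :
    (∫⁻ σ in Set.Ioi (1 : ℝ),
        ENNReal.ofReal (Real.sqrt (1 / σ ^ 2 - 1 / Real.sinh σ ^ 2))) = ⊤ := by
  -- Step 1: the lintegral of 1/(2σ) on Ioi 3 is ⊤.
  have key : (∫⁻ σ in Set.Ioi (3 : ℝ), ENNReal.ofReal (1 / (2 * σ))) = ⊤ := by
    by_contra h
    have hmeas : AEStronglyMeasurable (fun σ : ℝ => 1 / (2 * σ))
        (volume.restrict (Set.Ioi (3 : ℝ))) := by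
      apply Measurable.aestronglyMeasurable
      have : Measurable fun σ : ℝ => (2 * σ)⁻¹ :=
        (measurable_const_mul 2).inv
      simpa [one_div] using this
    have hpos : 0 ≤ᵐ[volume.restrict (Set.Ioi (3 : ℝ))] fun σ : ℝ => 1 / (2 * σ) := by
      filter_upwards [ae_restrict_mem measurableSet_Ioi] with x hx
      have : (0:ℝ) < x := lt_trans (by norm_num) hx
      positivity
    have hint : Integrable (fun σ : ℝ => 1 / (2 * σ))
        (volume.restrict (Set.Ioi (3 : ℝ))) :=
      (lintegral_ofReal_ne_top_iff_integrable hmeas hpos).mp h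
    have hinv : IntegrableOn (fun σ : ℝ => σ⁻¹) (Set.Ioi (3 : ℝ)) := by
      have := hint.const_mul (2 : ℝ)
      refine this.congr (Filter.EventuallyEq.of_eq ?_)
      funext x; field_simp
    exact not_IntegrableOn_Ioi_inv hinv
  -- Step 2: pointwise bound on Ioi 3.
  have hbound : ∀ x ∈ Set.Ioi (3 : ℝ),
      ENNReal.ofReal (1 / (2 * x)) ≤
        ENNReal.ofReal (Real.sqrt (1 / x ^ 2 - 1 / Real.sinh x ^ 2)) := by
    intro x hx
    have hx3 : (3 : ℝ) ≤ x := le_of_lt hx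
    have hx0 : (0 : ℝ) < x := by linarith
    have hsinh : 2 * x ≤ Real.sinh x := sinh_ge_two_mul hx3
    have hs0 : (0 : ℝ) < Real.sinh x := by linarith
    apply ENNReal.ofReal_le_ofReal
    have h1 : 1 / Real.sinh x ^ 2 ≤ 1 / (4 * x ^ 2) := by
      apply one_div_le_one_div_of_le (by positivity)
      nlinarith
    have h2 : (1 / (2 * x)) ^ 2 ≤ 1 / x ^ 2 - 1 / Real.sinh x ^ 2 := by
      have : (1 / (2 * x)) ^ 2 = 1 / (4 * x ^ 2) := by ring
      rw [this]
      have hx2 : (0:ℝ) < x ^ 2 := by positivity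
      have : 1 / (4 * x ^ 2) + 1 / (4 * x ^ 2) ≤ 1 / x ^ 2 := by
        rw [← add_div, div_le_div_iff₀ (by positivity) hx2]
        nlinarith
      linarith
    calc 1 / (2 * x) = Real.sqrt ((1 / (2 * x)) ^ 2) := by
          rw [Real.sqrt_sq (by positivity)]
      _ ≤ Real.sqrt (1 / x ^ 2 - 1 / Real.sinh x ^ 2) := Real.sqrt_le_sqrt h2
  -- Step 3: combine.
  have hsub : (∫⁻ σ in Set.Ioi (3 : ℝ),
      ENNReal.ofReal (Real.sqrt (1 / σ ^ 2 - 1 / Real.sinh σ ^ 2))) ≤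
      (∫⁻ σ in Set.Ioi (1 : ℝ),
      ENNReal.ofReal (Real.sqrt (1 / σ ^ 2 - 1 / Real.sinh σ ^ 2))) :=
    lintegral_mono_set (Set.Ioi_subset_Ioi (by norm_num))
  have hle : (∫⁻ σ in Set.Ioi (3 : ℝ), ENNReal.ofReal (1 / (2 * σ))) ≤
      (∫⁻ σ in Set.Ioi (3 : ℝ),
      ENNReal.ofReal (Real.sqrt (1 / σ ^ 2 - 1 / Real.sinh σ ^ 2))) :=
    setLIntegral_mono' measurableSet_Ioi hbound
  rw [key] at hle
  exact top_le_iff.mp (le_trans hle hsub)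
end
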